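/- The Shapley operator of a stopping stochastic game is a sup-norm contraction: let the game have p game elements, stage payoff matrices a^k of size m_k × n_k, and transition probabilities q^{kl}_{ij} ≥ 0 satisfying Σ_{l=1}^p q^{kl}_{ij} ≤ β for all k, i, j, where 0 ≤ β < 1. Define T : ℝ^p → ℝ^p by (T v)_k = val(B_k(v)), where B_k(v) is the m_k × n_k matrix with entries b^k_{ij} = a^k_{ij} + Σ_{l=1}^p q^{kl}_{ij} v_l. Then for all u, v ∈ ℝ^p, max_k |(T u)_k − (T v)_k| ≤ β · max_k |u_k − v_k|. -/

import Mathlib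

open scoped BigOperators

/-- Expected payoff to player 1 in the matrix game `B` when player 1 uses the
mixed strategy `y` and player 2 uses the mixed strategy `z`. -/
noncomputable def expectedPayoff {m n : ℕ} (B : Matrix (Fin m) (Fin n) ℝ)
    (y : Fin m → ℝ) (z : Fin n → ℝ) : ℝ :=
  ∑ i, ∑ j, y i * B i j * z j

/-- The value (in mixed strategies) of the zero-sum matrix game `B`:
`val(B) = sup_{y ∈ Δ_m} inf_{z ∈ Δ_n} ∑_{i,j} y_i B_{ij} z_j`. -/
noncomputable def matrixGameValue {m n : ℕ} (B : Matrix (Fin m) (Fin n) ℝ) : ℝ :=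
  ⨆ y : stdSimplex ℝ (Fin m), ⨅ z : stdSimplex ℝ (Fin n), expectedPayoff B y z

/-- The auxiliary matrix `B_k(v)` of a stochastic game, with entries
`b^k_{ij} = a^k_{ij} + ∑_l q^{kl}_{ij} v_l`. -/
noncomputable def gameElementMatrix {p : ℕ} {m n : Fin p → ℕ}
    (a : ∀ k, Matrix (Fin (m k)) (Fin (n k)) ℝ)
    (q : ∀ k, Fin (m k) → Fin (n k) → Fin p → ℝ)
    (v : Fin p → ℝ) (k : Fin p) : Matrix (Fin (m k)) (Fin (n k)) ℝ :=
  fun i j => a k i j + ∑ l, q k i j l * v l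

/-- The Shapley operator `T` of the stochastic game: `(T v)_k = val(B_k(v))`. -/
noncomputable def shapleyOperator {p : ℕ} {m n : Fin p → ℕ}
    (a : ∀ k, Matrix (Fin (m k)) (Fin (n k)) ℝ)
    (q : ∀ k, Fin (m k) → Fin (n k) → Fin p → ℝ)
    (v : Fin p → ℝ) : Fin p → ℝ :=
  fun k => matrixGameValue (gameElementMatrix a q v k)


lemma uniform_mem_stdSimplex {n : ℕ} (hn : 0 < n) :
    (fun _ : Fin n => (n : ℝ)⁻¹) ∈ stdSimplex ℝ (Fin n) := by
  constructor
  · intro i; positivity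
  · have hn' : (n : ℝ) ≠ 0 := Nat.cast_ne_zero.mpr hn.ne'
    simp [Finset.sum_const, Finset.card_univ, hn']

lemma abs_expectedPayoff_le {m n : ℕ} (B : Matrix (Fin m) (Fin n) ℝ)
    {y : Fin m → ℝ} {z : Fin n → ℝ}
    (hy : y ∈ stdSimplex ℝ (Fin m)) (hz : z ∈ stdSimplex ℝ (Fin n)) :
    |expectedPayoff B y z| ≤ ∑ i, ∑ j, |B i j| := by
  have hy1 : ∀ i, y i ≤ 1 := fun i => by
    calc y i ≤ ∑ i', y i' :=
          Finset.single_le_sum (fun i' _ => hy.1 i') (Finset.mem_univ i)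
    _ = 1 := hy.2
  have hz1 : ∀ j, z j ≤ 1 := fun j => by
    calc z j ≤ ∑ j', z j' :=
          Finset.single_le_sum (fun j' _ => hz.1 j') (Finset.mem_univ j)
    _ = 1 := hz.2
  calc |expectedPayoff B y z| ≤ ∑ i, |∑ j, y i * B i j * z j| :=
        Finset.abs_sum_le_sum_abs _ _
  _ ≤ ∑ i, ∑ j, |y i * B i j * z j| :=
        Finset.sum_le_sum fun i _ => Finset.abs_sum_le_sum_abs _ _
  _ ≤ ∑ i, ∑ j, |B i j| := by
      refine Finset.sum_le_sum fun i _ => Finset.sum_le_sum fun j _ => ?_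
      rw [abs_mul, abs_mul, abs_of_nonneg (hy.1 i), abs_of_nonneg (hz.1 j)]
      calc y i * |B i j| * z j ≤ 1 * |B i j| * 1 := by
            apply mul_le_mul _ (hz1 j) (hz.1 j) (by positivity)
            exact mul_le_mul (hy1 i) le_rfl (abs_nonneg _) zero_le_one
      _ = |B i j| := by ring

lemma expectedPayoff_le_add {m n : ℕ} {B C : Matrix (Fin m) (Fin n) ℝ} {c : ℝ}
    (h : ∀ i j, B i j ≤ C i j + c)
    {y : Fin m → ℝ} {z : Fin n → ℝ}
    (hy : y ∈ stdSimplex ℝ (Fin m)) (hz : z ∈ stdSimplex ℝ (Fin n)) :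
    expectedPayoff B y z ≤ expectedPayoff C y z + c := by
  have step : expectedPayoff B y z ≤ ∑ i, ∑ j, y i * (C i j + c) * z j := by
    refine Finset.sum_le_sum fun i _ => Finset.sum_le_sum fun j _ => ?_
    exact mul_le_mul_of_nonneg_right
      (mul_le_mul_of_nonneg_left (h i j) (hy.1 i)) (hz.1 j)
  have eq1 : ∑ i, ∑ j, y i * (C i j + c) * z j = expectedPayoff C y z + c := by
    have h2 : ∀ i, ∑ j, y i * c * z j = y i * c := by
      intro i
      rw [← Finset.mul_sum, hz.2, mul_one]
    have h3 : ∑ i, y i * c = c := by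
      rw [← Finset.sum_mul, hy.2, one_mul]
    calc ∑ i, ∑ j, y i * (C i j + c) * z j
        = ∑ i, (∑ j, y i * C i j * z j + ∑ j, y i * c * z j) := by
          refine Finset.sum_congr rfl fun i _ => ?_
          rw [← Finset.sum_add_distrib]
          exact Finset.sum_congr rfl fun j _ => by ring
    _ = ∑ i, (∑ j, y i * C i j * z j) + ∑ i, y i * c := by
          rw [Finset.sum_add_distrib]
          simp [h2]
    _ = expectedPayoff C y z + c := by rw [h3]; rfl
  exact step.trans_eq eq1

lemma matrixGameValue_le_add {m n : ℕ} (hm : 0 < m) (hn : 0 < n)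
    {B C : Matrix (Fin m) (Fin n) ℝ} {c : ℝ}
    (h : ∀ i j, B i j ≤ C i j + c) :
    matrixGameValue B ≤ matrixGameValue C + c := by
  haveI hym : Nonempty (stdSimplex ℝ (Fin m)) := ⟨⟨_, uniform_mem_stdSimplex hm⟩⟩
  haveI hzn : Nonempty (stdSimplex ℝ (Fin n)) := ⟨⟨_, uniform_mem_stdSimplex hn⟩⟩
  set MB := ∑ i, ∑ j, |B i j| with hMB
  set MC := ∑ i, ∑ j, |C i j| with hMC
  have hbB : ∀ y : stdSimplex ℝ (Fin m),
      BddBelow (Set.range fun z : stdSimplex ℝ (Fin n) => expectedPayoff B y z) := by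
    intro y
    refine ⟨-MB, ?_⟩
    rintro x ⟨z, rfl⟩
    exact neg_le_of_abs_le (abs_expectedPayoff_le B y.2 z.2)
  have hbC : ∀ y : stdSimplex ℝ (Fin m),
      BddBelow (Set.range fun z : stdSimplex ℝ (Fin n) => expectedPayoff C y z) := by
    intro y
    refine ⟨-MC, ?_⟩
    rintro x ⟨z, rfl⟩
    exact neg_le_of_abs_le (abs_expectedPayoff_le C y.2 z.2)
  set FB : stdSimplex ℝ (Fin m) → ℝ :=
    fun y => ⨅ z : stdSimplex ℝ (Fin n), expectedPayoff B y z with hFB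
  set FC : stdSimplex ℝ (Fin m) → ℝ :=
    fun y => ⨅ z : stdSimplex ℝ (Fin n), expectedPayoff C y z with hFC
  have key : ∀ y, FB y ≤ FC y + c := by
    intro y
    have h1 : ∀ z : stdSimplex ℝ (Fin n), FB y - c ≤ expectedPayoff C y z := by
      intro z
      have h2 : FB y ≤ expectedPayoff B y z := ciInf_le (hbB y) z
      have h3 : expectedPayoff B y z ≤ expectedPayoff C y z + c := expectedPayoff_le_add h y.2 z.2
      linarith
    have := le_ciInf h1
    linarith [this]
  have hbFC : BddAbove (Set.range FC) := by
    refine ⟨MC, ?_⟩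
    rintro x ⟨y, rfl⟩
    obtain ⟨z0⟩ := hzn
    calc FC y ≤ expectedPayoff C y z0 := ciInf_le (hbC y) z0
    _ ≤ MC := le_of_abs_le (abs_expectedPayoff_le C y.2 z0.2)
  refine ciSup_le fun y => ?_
  exact (key y).trans (add_le_add_left (le_ciSup hbFC y) c)

/-- **The Shapley operator of a stopping stochastic game is a sup-norm
`β`-contraction:** if all transition probabilities are nonnegative and
`∑_l q^{kl}_{ij} ≤ β < 1`, then
`max_k |(T u)_k − (T v)_k| ≤ β · max_k |u_k − v_k|`. -/
theorem shapleyOperator_contraction (p : ℕ) (hp : 0 < p) (m n : Fin p → ℕ)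
    (hm : ∀ k, 0 < m k) (hn : ∀ k, 0 < n k)
    (a : ∀ k, Matrix (Fin (m k)) (Fin (n k)) ℝ)
    (q : ∀ k, Fin (m k) → Fin (n k) → Fin p → ℝ)
    (hq : ∀ k i j l, 0 ≤ q k i j l)
    (β : ℝ) (hβ0 : 0 ≤ β) (hβ1 : β < 1)
    (hqβ : ∀ k i j, ∑ l, q k i j l ≤ β)
    (u v : Fin p → ℝ) :
    (⨆ k, |shapleyOperator a q u k - shapleyOperator a q v k|) ≤
      β * ⨆ k, |u k - v k| := by
  haveI : Nonempty (Fin p) := ⟨⟨0, hp⟩⟩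
  set D := ⨆ k, |u k - v k| with hD
  have hbd : BddAbove (Set.range fun k => |u k - v k|) :=
    (Set.finite_range _).bddAbove
  have hDk : ∀ k, |u k - v k| ≤ D := fun k => le_ciSup hbd k
  have hD0 : 0 ≤ D := (abs_nonneg _).trans (hDk ⟨0, hp⟩)
  have entry : ∀ (w w' : Fin p → ℝ), (∀ l, |w l - w' l| ≤ D) → ∀ k i j,
      gameElementMatrix a q w k i j ≤ gameElementMatrix a q w' k i j + β * D := by
    intro w w' hww k i j
    have h2 : ∑ l, q k i j l * (w l - w' l) ≤ β * D := by
      calc ∑ l, q k i j l * (w l - w' l) ≤ ∑ l, q k i j l * D :=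
            Finset.sum_le_sum fun l _ =>
              mul_le_mul_of_nonneg_left ((le_abs_self _).trans (hww l)) (hq k i j l)
      _ = (∑ l, q k i j l) * D := (Finset.sum_mul _ _ _).symm
      _ ≤ β * D := mul_le_mul_of_nonneg_right (hqβ k i j) hD0
    have h1 : ∑ l, q k i j l * w l - ∑ l, q k i j l * w' l
        = ∑ l, q k i j l * (w l - w' l) := by
      rw [← Finset.sum_sub_distrib]
      exact Finset.sum_congr rfl fun l _ => by ring
    simp only [gameElementMatrix]
    linarith
  have hvu : ∀ l, |v l - u l| ≤ D := fun l => by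
    rw [abs_sub_comm]; exact hDk l
  refine ciSup_le fun k => ?_
  rw [abs_le]
  constructor
  · have := matrixGameValue_le_add (hm k) (hn k) (entry v u hvu k)
    simp only [shapleyOperator]
    linarith
  · have := matrixGameValue_le_add (hm k) (hn k) (entry u v hDk k)
    simp only [shapleyOperator]
    linarith
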